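/- Let f : Set X → 3 be represented by a partial map f₀ : Set X ⇀ 3 with finite domain, where f additionally satisfies (E2'). Then f(∅) = ⊥ if and only if ⋂ { A ∈ dom(f₀) | f₀(A) > ⊥ } ≠ ∅ (with the empty intersection taken to be X, assumed nonempty). -/

import Mathlib

/- We represent the three-valued set `3 = {⊥ < * < ⊤}` by `Fin 3`
with `⊥ = 0`, `* = 1`, `⊤ = 2`. A partial map `f₀ : Set X ⇀ 3` is given
as a function `Set X → Option (Fin 3)`; its domain is where it is `some`. -/

/-- The values achievable at `B`: minima of `f₀`-values over nonempty finite
families of domain sets whose intersection is `B`. -/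
def Achievable {X : Type} (f₀ : Set X → Option (Fin 3)) (B : Set X) : Set (Fin 3) :=
  {v | ∃ (s : Finset (Set X)) (hs : s.Nonempty),
    (∀ A ∈ s, (f₀ A).isSome) ∧ (⋂ A ∈ s, A) = B ∧
    v = s.inf' hs fun A => (f₀ A).getD 0}

/-- `f` is the total map represented by the partial map `f₀` (which has
finite domain): `f B` is the maximum of the achievable values at `B`,
with default `⊥ = 0` when no value is achievable. -/
def Represents {X : Type} (f₀ : Set X → Option (Fin 3)) (f : Set X → Fin 3) : Prop :=
  {A | (f₀ A).isSome}.Finite ∧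
  ∀ B : Set X, IsGreatest (insert (0 : Fin 3) (Achievable f₀ B)) (f B)

theorem stmt14 {X : Type} [Nonempty X]
    (f₀ : Set X → Option (Fin 3)) (f : Set X → Fin 3)
    (hrep : Represents f₀ f)
    (hE2 : ∀ A B : Set X, min (f A) (f B) ≤ f (A ∩ B)) :
    f ∅ = 0 ↔ ⋂₀ {A | (f₀ A).isSome ∧ 0 < (f₀ A).getD 0} ≠ ∅ := by
  obtain ⟨hdomfin, hgr⟩ := hrep
  have hg := hgr ∅
  constructor
  · intro h0 hI
    set S := {A : Set X | (f₀ A).isSome ∧ 0 < (f₀ A).getD 0} with hS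
    have hfin : S.Finite := hdomfin.subset (fun A hA => hA.1)
    have hSne : S.Nonempty := by
      by_contra hne
      rw [Set.not_nonempty_iff_eq_empty] at hne
      rw [hne, Set.sInter_empty] at hI
      exact Set.univ_nonempty.ne_empty hI
    let s := hfin.toFinset
    have hsne : s.Nonempty := hfin.toFinset_nonempty.mpr hSne
    have hmem : ∀ A ∈ s, (f₀ A).isSome := fun A hA => (hfin.mem_toFinset.mp hA).1
    have hint : (⋂ A ∈ s, A) = ∅ := by
      rw [← hI]
      ext x
      simp only [Set.mem_iInter, Set.mem_sInter, s, Set.Finite.mem_toFinset]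
    have hvach : (s.inf' hsne fun A => (f₀ A).getD 0) ∈ Achievable f₀ ∅ :=
      ⟨s, hsne, hmem, hint, rfl⟩
    have hle : (s.inf' hsne fun A => (f₀ A).getD 0) ≤ f ∅ :=
      hg.2 (Set.mem_insert_of_mem _ hvach)
    have hvpos : 0 < s.inf' hsne fun A => (f₀ A).getD 0 := by
      rw [Finset.lt_inf'_iff]
      exact fun A hA => (hfin.mem_toFinset.mp hA).2
    rw [h0] at hle
    exact absurd (lt_of_lt_of_le hvpos hle) (lt_irrefl 0)
  · intro hI
    by_contra hne
    have hpos : 0 < f ∅ := Fin.pos_iff_ne_zero.mpr hne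
    have hmem := hg.1
    rcases hmem with h | h
    · exact hne h
    · obtain ⟨s, hsne, hmem, hint, hv⟩ := h
      apply hI
      rw [Set.eq_empty_iff_forall_notMem]
      intro x hx
      have hxs : x ∈ ⋂ A ∈ s, A := by
        simp only [Set.mem_iInter]
        intro A hA
        have hApos : 0 < (f₀ A).getD 0 := by
          have := Finset.inf'_le (fun B => (f₀ B).getD 0) hA
          rw [← hv] at this
          exact lt_of_lt_of_le hpos this
        exact hx A ⟨hmem A hA, hApos⟩
      rw [hint] at hxs
      exact hxs
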